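/- arXiv:1803.05524 — 7 statements merged into one kernel-verified Lean document; each statement's English description precedes it below -/
import Mathlib

section
/- Assume property (C'_k): Im d_{-1/h} ∩ ker d_h = Im(d_h ∘ d_{-1/h}) and Im d_h ∩ ker d_{-1/h} = Im(d_h ∘ d_{-1/h}) in degree k. Then property (A'_k) holds: ker d_h ∩ ker d_{-1/h} ∩ (Im d_h + Im d_{-1/h}) = Im(d_h ∘ d_{-1/h}) in degree k. -/
/-- (C'_k) implies (A'_k). -/
theorem stmt_6 {V0 V1 V2 V3 : Type*}
    [AddCommGroup V0] [Module ℂ V0] [AddCommGroup V1] [Module ℂ V1]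
    [AddCommGroup V2] [Module ℂ V2] [AddCommGroup V3] [Module ℂ V3]
    (d01 D01 : V0 →ₗ[ℂ] V1) (d12 D12 : V1 →ₗ[ℂ] V2) (d23 D23 : V2 →ₗ[ℂ] V3)
    (hd2a : d12 ∘ₗ d01 = 0) (hd2b : d23 ∘ₗ d12 = 0)
    (hD2a : D12 ∘ₗ D01 = 0) (hD2b : D23 ∘ₗ D12 = 0)
    (hanti1 : d12 ∘ₗ D01 + D12 ∘ₗ d01 = 0)
    (hanti2 : d23 ∘ₗ D12 + D23 ∘ₗ d12 = 0)
    (hC1 : LinearMap.range D12 ⊓ LinearMap.ker d23 = LinearMap.range (d12 ∘ₗ D01))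
    (hC2 : LinearMap.range d12 ⊓ LinearMap.ker D23 = LinearMap.range (d12 ∘ₗ D01)) :
    LinearMap.ker d23 ⊓ LinearMap.ker D23
      ⊓ (LinearMap.range d12 ⊔ LinearMap.range D12)
      = LinearMap.range (d12 ∘ₗ D01) := by
  apply le_antisymm
  · rintro x ⟨⟨hxd, hxD⟩, hx⟩
    obtain ⟨y, ⟨a, ha⟩, z, ⟨b, hb⟩, hyz⟩ := Submodule.mem_sup.mp hx
    have hda : d23 y = 0 := by
      rw [← ha]; exact congrFun (congrArg DFunLike.coe hd2b) a
    have hDb : D23 z = 0 := by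
      rw [← hb]; exact congrFun (congrArg DFunLike.coe hD2b) b
    have hdz : d23 z = 0 := by
      have : d23 (y + z) = 0 := by rw [hyz]; exact hxd
      simpa [map_add, hda] using this
    have hDy : D23 y = 0 := by
      have : D23 (y + z) = 0 := by rw [hyz]; exact hxD
      simpa [map_add, hDb] using this
    have hy : y ∈ LinearMap.range (d12 ∘ₗ D01) := by
      rw [← hC2]; exact ⟨⟨a, ha⟩, hDy⟩
    have hz : z ∈ LinearMap.range (d12 ∘ₗ D01) := by
      rw [← hC1]; exact ⟨⟨b, hb⟩, hdz⟩
    rw [← hyz]; exact Submodule.add_mem _ hy hz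
  · rintro x ⟨c, rfl⟩
    refine ⟨⟨?_, ?_⟩, Submodule.mem_sup_left ⟨D01 c, rfl⟩⟩
    · show d23 (d12 (D01 c)) = 0
      have := congrFun (congrArg DFunLike.coe hd2b) (D01 c)
      simpa using this
    · show D23 (d12 (D01 c)) = 0
      have h2 := congrFun (congrArg DFunLike.coe hanti2) (D01 c)
      have h0 := congrFun (congrArg DFunLike.coe hD2a) c
      simp only [LinearMap.add_apply, LinearMap.comp_apply, LinearMap.zero_apply] at h2 h0
      rw [h0, map_zero, zero_add] at h2
      exact h2
end

section
/- Assume property (C'_k): Im d_{-1/h} ∩ ker d_h = Im(d_h ∘ d_{-1/h}) and Im d_h ∩ ker d_{-1/h} = Im(d_h ∘ d_{-1/h}) in degree k. Then property (D'_{k-1}) holds: Im d_h + ker d_{-1/h} = ker(d_h ∘ d_{-1/h}) and Im d_{-1/h} + ker d_h = ker(d_h ∘ d_{-1/h}) in degree k-1. -/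
/-- (C'_k) implies (D'_{k-1}): Im d_h + ker d_{-1/h} = ker(d_h ∘ d_{-1/h}) and
Im d_{-1/h} + ker d_h = ker(d_h ∘ d_{-1/h}) in degree k-1 (the space V1). -/
theorem stmt_7 {V0 V1 V2 V3 : Type*}
    [AddCommGroup V0] [Module ℂ V0] [AddCommGroup V1] [Module ℂ V1]
    [AddCommGroup V2] [Module ℂ V2] [AddCommGroup V3] [Module ℂ V3]
    (d01 D01 : V0 →ₗ[ℂ] V1) (d12 D12 : V1 →ₗ[ℂ] V2) (d23 D23 : V2 →ₗ[ℂ] V3)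
    (hd2a : d12 ∘ₗ d01 = 0) (hd2b : d23 ∘ₗ d12 = 0)
    (hD2a : D12 ∘ₗ D01 = 0) (hD2b : D23 ∘ₗ D12 = 0)
    (hanti1 : d12 ∘ₗ D01 + D12 ∘ₗ d01 = 0)
    (hanti2 : d23 ∘ₗ D12 + D23 ∘ₗ d12 = 0)
    (hC1 : LinearMap.range D12 ⊓ LinearMap.ker d23 = LinearMap.range (d12 ∘ₗ D01))
    (hC2 : LinearMap.range d12 ⊓ LinearMap.ker D23 = LinearMap.range (d12 ∘ₗ D01)) :
    LinearMap.range d01 ⊔ LinearMap.ker D12 = LinearMap.ker (d23 ∘ₗ D12) ∧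
    LinearMap.range D01 ⊔ LinearMap.ker d12 = LinearMap.ker (d23 ∘ₗ D12) := by
  have hA1 : ∀ x, d12 (D01 x) = - D12 (d01 x) := by
    intro x
    have h := LinearMap.congr_fun hanti1 x
    simp only [LinearMap.add_apply, LinearMap.comp_apply, LinearMap.zero_apply] at h
    exact eq_neg_of_add_eq_zero_left h
  have hA2 : ∀ x, d23 (D12 x) = - D23 (d12 x) := by
    intro x
    have h := LinearMap.congr_fun hanti2 x
    simp only [LinearMap.add_apply, LinearMap.comp_apply, LinearMap.zero_apply] at h
    exact eq_neg_of_add_eq_zero_left h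
  constructor
  · apply le_antisymm
    · apply sup_le
      · rintro _ ⟨x, rfl⟩
        have h : d12 (d01 x) = 0 := by simpa using LinearMap.congr_fun hd2a x
        simp only [LinearMap.mem_ker, LinearMap.comp_apply]
        rw [hA2, h, map_zero, neg_zero]
      · rintro x hx
        simp only [LinearMap.mem_ker, LinearMap.comp_apply] at hx ⊢
        rw [hx, map_zero]
    · rintro x hx
      simp only [LinearMap.mem_ker, LinearMap.comp_apply] at hx
      have hm : D12 x ∈ LinearMap.range D12 ⊓ LinearMap.ker d23 := ⟨⟨x, rfl⟩, hx⟩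
      rw [hC1] at hm
      obtain ⟨y, hy⟩ := hm
      simp only [LinearMap.comp_apply] at hy
      rw [hA1] at hy
      have hk : D12 (x + d01 y) = 0 := by
        rw [map_add, ← hy]; abel
      have : x = d01 (-y) + (x + d01 y) := by rw [map_neg]; abel
      rw [this]
      exact Submodule.add_mem_sup ⟨-y, rfl⟩ hk
  · apply le_antisymm
    · apply sup_le
      · rintro _ ⟨x, rfl⟩
        have h : D12 (D01 x) = 0 := by simpa using LinearMap.congr_fun hD2a x
        simp only [LinearMap.mem_ker, LinearMap.comp_apply]
        rw [h, map_zero]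
      · rintro x hx
        simp only [LinearMap.mem_ker] at hx
        simp only [LinearMap.mem_ker, LinearMap.comp_apply]
        rw [hA2, hx, map_zero, neg_zero]
    · rintro x hx
      simp only [LinearMap.mem_ker, LinearMap.comp_apply] at hx
      rw [hA2] at hx
      have hx' : D23 (d12 x) = 0 := neg_eq_zero.mp hx
      have hm : d12 x ∈ LinearMap.range d12 ⊓ LinearMap.ker D23 := ⟨⟨x, rfl⟩, hx'⟩
      rw [hC2] at hm
      obtain ⟨y, hy⟩ := hm
      simp only [LinearMap.comp_apply] at hy
      have hk : d12 (x - D01 y) = 0 := by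
        rw [map_sub, ← hy, sub_self]
      have : x = D01 y + (x - D01 y) := by abel
      rw [this]
      exact Submodule.add_mem_sup ⟨y, rfl⟩ hk
end

section
/- Assume property (D'_{k-1}): Im d_h + ker d_{-1/h} = ker(d_h ∘ d_{-1/h}) and Im d_{-1/h} + ker d_h = ker(d_h ∘ d_{-1/h}) in degree k-1. Then property (C'_k) holds: Im d_{-1/h} ∩ ker d_h = Im(d_h ∘ d_{-1/h}) and Im d_h ∩ ker d_{-1/h} = Im(d_h ∘ d_{-1/h}) in degree k. -/
/-- (D'_{k-1}) implies (C'_k). -/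
theorem stmt_8 {V0 V1 V2 V3 : Type*}
    [AddCommGroup V0] [Module ℂ V0] [AddCommGroup V1] [Module ℂ V1]
    [AddCommGroup V2] [Module ℂ V2] [AddCommGroup V3] [Module ℂ V3]
    (d01 D01 : V0 →ₗ[ℂ] V1) (d12 D12 : V1 →ₗ[ℂ] V2) (d23 D23 : V2 →ₗ[ℂ] V3)
    (hd2a : d12 ∘ₗ d01 = 0) (hd2b : d23 ∘ₗ d12 = 0)
    (hD2a : D12 ∘ₗ D01 = 0) (hD2b : D23 ∘ₗ D12 = 0)
    (hanti1 : d12 ∘ₗ D01 + D12 ∘ₗ d01 = 0)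
    (hanti2 : d23 ∘ₗ D12 + D23 ∘ₗ d12 = 0)
    (hD1 : LinearMap.range d01 ⊔ LinearMap.ker D12 = LinearMap.ker (d23 ∘ₗ D12))
    (hD2 : LinearMap.range D01 ⊔ LinearMap.ker d12 = LinearMap.ker (d23 ∘ₗ D12)) :
    LinearMap.range D12 ⊓ LinearMap.ker d23 = LinearMap.range (d12 ∘ₗ D01) ∧
    LinearMap.range d12 ⊓ LinearMap.ker D23 = LinearMap.range (d12 ∘ₗ D01) := by
  have hac1 : ∀ x : V0, d12 (D01 x) = -(D12 (d01 x)) := by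
    intro x
    have h := congrArg (fun f => f x) hanti1
    simp only [LinearMap.add_apply, LinearMap.comp_apply, LinearMap.zero_apply] at h
    exact eq_neg_of_add_eq_zero_left h
  have hac2 : ∀ x : V1, d23 (D12 x) = -(D23 (d12 x)) := by
    intro x
    have h := congrArg (fun f => f x) hanti2
    simp only [LinearMap.add_apply, LinearMap.comp_apply, LinearMap.zero_apply] at h
    exact eq_neg_of_add_eq_zero_left h
  constructor
  · apply le_antisymm
    · rintro v ⟨⟨u, rfl⟩, hv2⟩
      have hu : u ∈ LinearMap.ker (d23 ∘ₗ D12) := hv2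
      rw [← hD1] at hu
      obtain ⟨y, ⟨a, rfl⟩, w, hw, rfl⟩ := Submodule.mem_sup.mp hu
      refine ⟨-a, ?_⟩
      have hw' : D12 w = 0 := hw
      simp only [LinearMap.comp_apply, map_neg, map_add, hw', add_zero, hac1, neg_neg]
    · rintro v ⟨a, rfl⟩
      refine ⟨⟨-(d01 a), by simp [hac1]⟩, ?_⟩
      have : d23 (d12 (D01 a)) = 0 := by
        have := congrArg (fun f => f (D01 a)) hd2b
        simpa using this
      exact this
  · apply le_antisymm
    · rintro v ⟨⟨u, rfl⟩, hv2⟩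
      have hv2' : D23 (d12 u) = 0 := hv2
      have hu : u ∈ LinearMap.ker (d23 ∘ₗ D12) := by
        simp only [LinearMap.mem_ker, LinearMap.comp_apply, hac2, hv2', neg_zero]
      rw [← hD2] at hu
      obtain ⟨y, ⟨a, rfl⟩, w, hw, rfl⟩ := Submodule.mem_sup.mp hu
      refine ⟨a, ?_⟩
      have hw' : d12 w = 0 := hw
      simp [LinearMap.comp_apply, hw']
    · rintro v ⟨a, rfl⟩
      refine ⟨⟨D01 a, rfl⟩, ?_⟩
      have h1 : D23 (d12 (D01 a)) = 0 := by
        have h2 : d23 (D12 (D01 a)) = -(D23 (d12 (D01 a))) := hac2 (D01 a)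
        have h3 : D12 (D01 a) = 0 := by
          have := congrArg (fun f => f a) hD2a
          simpa using this
        rw [h3, map_zero] at h2
        exact (neg_eq_zero.mp h2.symm)
      exact h1
end

section
/- Assume property (D'_{k-1}): Im d_h + ker d_{-1/h} = ker(d_h ∘ d_{-1/h}) and Im d_{-1/h} + ker d_h = ker(d_h ∘ d_{-1/h}) in degree k-1. Then property (B'_{k-1}) holds: Im d_h + Im d_{-1/h} + (ker d_h ∩ ker d_{-1/h}) = ker(d_h ∘ d_{-1/h}) in degree k-1. -/
/-- (D'_{k-1}) implies (B'_{k-1}): Im d_h + Im d_{-1/h} + (ker d_h ∩ ker d_{-1/h})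
= ker(d_h ∘ d_{-1/h}) in degree k-1 (the space V1). -/
theorem stmt_9 {V0 V1 V2 V3 : Type*}
    [AddCommGroup V0] [Module ℂ V0] [AddCommGroup V1] [Module ℂ V1]
    [AddCommGroup V2] [Module ℂ V2] [AddCommGroup V3] [Module ℂ V3]
    (d01 D01 : V0 →ₗ[ℂ] V1) (d12 D12 : V1 →ₗ[ℂ] V2) (d23 D23 : V2 →ₗ[ℂ] V3)
    (hd2a : d12 ∘ₗ d01 = 0) (hd2b : d23 ∘ₗ d12 = 0)
    (hD2a : D12 ∘ₗ D01 = 0) (hD2b : D23 ∘ₗ D12 = 0)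
    (hanti1 : d12 ∘ₗ D01 + D12 ∘ₗ d01 = 0)
    (hanti2 : d23 ∘ₗ D12 + D23 ∘ₗ d12 = 0)
    (hD1 : LinearMap.range d01 ⊔ LinearMap.ker D12 = LinearMap.ker (d23 ∘ₗ D12))
    (hD2 : LinearMap.range D01 ⊔ LinearMap.ker d12 = LinearMap.ker (d23 ∘ₗ D12)) :
    LinearMap.range d01 ⊔ LinearMap.range D01 ⊔ (LinearMap.ker d12 ⊓ LinearMap.ker D12)
      = LinearMap.ker (d23 ∘ₗ D12) := by
  apply le_antisymm
  · refine sup_le (sup_le ?_ ?_) ?_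
    · rw [← hD1]; exact le_sup_left
    · intro x hx
      obtain ⟨a, rfl⟩ := hx
      have : D12 (D01 a) = 0 := congrFun (congrArg DFunLike.coe hD2a) a
      simp [LinearMap.mem_ker, this]
    · intro x hx
      simp only [LinearMap.mem_ker, LinearMap.comp_apply]
      rw [hx.2]; simp
  · intro x hx
    have hxk := hx
    rw [← hD2] at hx
    obtain ⟨a, ha, y, hy, rfl⟩ := Submodule.mem_sup.mp hx
    have hyk : y ∈ LinearMap.ker (d23 ∘ₗ D12) := by
      obtain ⟨a0, rfl⟩ := ha
      have h1 : D12 (D01 a0) = 0 := congrFun (congrArg DFunLike.coe hD2a) a0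
      have hx' : d23 (D12 (D01 a0 + y)) = 0 := hxk
      simp only [LinearMap.mem_ker, LinearMap.comp_apply]
      simpa [h1] using hx'
    rw [← hD1] at hyk
    obtain ⟨b, hb, z, hz, rfl⟩ := Submodule.mem_sup.mp hyk
    have hzd : z ∈ LinearMap.ker d12 := by
      obtain ⟨b0, rfl⟩ := hb
      have h1 : d12 (d01 b0) = 0 := congrFun (congrArg DFunLike.coe hd2a) b0
      have hy' : d12 (d01 b0 + z) = 0 := hy
      simp only [LinearMap.mem_ker]
      simpa [h1] using hy'
    have h1 : a ∈ LinearMap.range d01 ⊔ LinearMap.range D01 ⊔ (LinearMap.ker d12 ⊓ LinearMap.ker D12) :=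
      Submodule.mem_sup_left (Submodule.mem_sup_right ha)
    have h2 : b ∈ LinearMap.range d01 ⊔ LinearMap.range D01 ⊔ (LinearMap.ker d12 ⊓ LinearMap.ker D12) :=
      Submodule.mem_sup_left (Submodule.mem_sup_left hb)
    have h3 : z ∈ LinearMap.range d01 ⊔ LinearMap.range D01 ⊔ (LinearMap.ker d12 ⊓ LinearMap.ker D12) :=
      Submodule.mem_sup_right ⟨hzd, hz⟩
    exact add_mem h1 (add_mem h2 h3)
end

section
/- Suppose that in degree k the following holds: for every u ∈ ker d_h ∩ ker d_{-1/h}, if u ∈ Im d_h or u ∈ Im d_{-1/h}, then u ∈ Im(d_h ∘ d_{-1/h}). Then for every u ∈ ker d_h ∩ ker d_{-1/h} in degree k with u ∈ Im d, one also has u ∈ Im(d_h ∘ d_{-1/h}), where d := ((h+1)/(h²+1))·d_h + (h(h-1)/(h²+1))·d_{-1/h}. -/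
/-- If in degree k every u ∈ ker d_h ∩ ker d_{-1/h} that is d_h- or d_{-1/h}-exact is
(d_h d_{-1/h})-exact, then every such u that is d-exact is also (d_h d_{-1/h})-exact,
where d = ((h+1)/(h²+1))·d_h + (h(h-1)/(h²+1))·d_{-1/h}. -/
theorem stmt_11 {V0 V1 V2 V3 : Type*}
    [AddCommGroup V0] [Module ℂ V0] [AddCommGroup V1] [Module ℂ V1]
    [AddCommGroup V2] [Module ℂ V2] [AddCommGroup V3] [Module ℂ V3]
    (d01 D01 : V0 →ₗ[ℂ] V1) (d12 D12 : V1 →ₗ[ℂ] V2) (d23 D23 : V2 →ₗ[ℂ] V3)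
    (hd2a : d12 ∘ₗ d01 = 0) (hd2b : d23 ∘ₗ d12 = 0)
    (hD2a : D12 ∘ₗ D01 = 0) (hD2b : D23 ∘ₗ D12 = 0)
    (hanti1 : d12 ∘ₗ D01 + D12 ∘ₗ d01 = 0)
    (hanti2 : d23 ∘ₗ D12 + D23 ∘ₗ d12 = 0)
    (h : ℝ) (hh : h ≠ 0)
    (hyp : ∀ u : V2, d23 u = 0 → D23 u = 0 →
      (u ∈ LinearMap.range d12 ∨ u ∈ LinearMap.range D12) →
      u ∈ LinearMap.range (d12 ∘ₗ D01)) :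
    ∀ u : V2, d23 u = 0 → D23 u = 0 →
      u ∈ LinearMap.range ((((h + 1) / (h ^ 2 + 1) : ℝ) : ℂ) • d12
          + ((h * (h - 1) / (h ^ 2 + 1) : ℝ) : ℂ) • D12) →
      u ∈ LinearMap.range (d12 ∘ₗ D01) := by

  intro u hdu hDu ⟨v, hv⟩
  set a : ℂ := (((h + 1) / (h ^ 2 + 1) : ℝ) : ℂ) with ha
  set b : ℂ := ((h * (h - 1) / (h ^ 2 + 1) : ℝ) : ℂ) with hb
  have hv' : a • d12 v + b • D12 v = u := by
    simpa [LinearMap.add_apply, LinearMap.smul_apply] using hv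
  by_cases hb0 : b = 0
  · refine hyp u hdu hDu (Or.inl ⟨a • v, ?_⟩)
    rw [map_smul]
    rw [hb0, zero_smul, add_zero] at hv'
    exact hv'
  · have hdd : d23 (d12 v) = 0 := by
      have := congrFun (congrArg DFunLike.coe hd2b) v
      simpa using this
    have hDD : D23 (D12 v) = 0 := by
      have := congrFun (congrArg DFunLike.coe hD2b) v
      simpa using this
    have hmix : d23 (D12 v) + D23 (d12 v) = 0 := by
      have := congrFun (congrArg DFunLike.coe hanti2) v
      simpa using this
    have h1 : d23 (D12 v) = 0 := by
      have : b • d23 (D12 v) = 0 := by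
        have := hdu
        rw [← hv'] at this
        simpa [map_add, map_smul, hdd] using this
      exact (smul_eq_zero.mp this).resolve_left hb0
    have h2 : D23 (d12 v) = 0 := by
      have := hmix
      rw [h1, zero_add] at this
      exact this
    have w1 : d12 v ∈ LinearMap.range (d12 ∘ₗ D01) :=
      hyp (d12 v) hdd h2 (Or.inl ⟨v, rfl⟩)
    have w2 : D12 v ∈ LinearMap.range (d12 ∘ₗ D01) :=
      hyp (D12 v) h1 hDD (Or.inr ⟨v, rfl⟩)
    rw [← hv']
    exact Submodule.add_mem _ (Submodule.smul_mem _ a w1) (Submodule.smul_mem _ b w2)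
end

section
/- On a compact Hermitian manifold, suppose both Laplace-type operators Δ_h = d_h d_h* + d_h* d_h and Δ_{-1/h} are equal up to a positive scalar (Δ_h = h²·Δ_{-1/h}, as holds when the metric is Kähler), so that ker Δ_h = ker Δ_{-1/h}, and suppose d_h anticommutes with both d_{-1/h} and d_{-1/h}*. If u is a form with u ∈ ker d_h ∩ ker d_{-1/h} and u = d_h v for some v, then u ∈ Im(d_h ∘ d_{-1/h}). (Abstract Hodge-theoretic version of the h-∂∂̄-lemma.) -/
/-- Abstract Hodge-theoretic h-∂∂̄-lemma: with d = d_h, D = d_{-1/h}, adjoints ds, Ds,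
assume the orthogonal three-space decomposition w.r.t. Δ_{-1/h}, the equality of kernels
ker Δ_{-1/h} = ker Δ_h = ker d_h ∩ ker d_h*, the anticommutations, and ker d_{-1/h} ⊥
Im d_{-1/h}*. Then any u ∈ ker d_h ∩ ker d_{-1/h} with u = d_h v lies in
Im(d_h ∘ d_{-1/h}). -/
theorem stmt_15 {V : Type*} [NormedAddCommGroup V] [InnerProductSpace ℂ V]
    (d D ds Ds : V →ₗ[ℂ] V)
    (hd2 : d ∘ₗ d = 0) (hD2 : D ∘ₗ D = 0)
    (hdecomp : ∀ v : V, ∃ v0 u1 u2 : V,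
      (D ∘ₗ Ds + Ds ∘ₗ D) v0 = 0 ∧ v = v0 + D u1 + Ds u2)
    (hker1 : LinearMap.ker (D ∘ₗ Ds + Ds ∘ₗ D) = LinearMap.ker (d ∘ₗ ds + ds ∘ₗ d))
    (hker2 : LinearMap.ker (d ∘ₗ ds + ds ∘ₗ d) = LinearMap.ker d ⊓ LinearMap.ker ds)
    (hanti1 : d ∘ₗ D + D ∘ₗ d = 0) (hanti2 : d ∘ₗ Ds + Ds ∘ₗ d = 0)
    (horth : ∀ x y : V, D x = 0 → (inner ℂ x (Ds y) : ℂ) = 0) :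
    ∀ u v : V, d u = 0 → D u = 0 → u = d v → ∃ w : V, u = d (D w) := by
  intro u v hdu hDu huv
  obtain ⟨v0, u1, u2, hv0, hvsum⟩ := hdecomp v
  -- v0 is harmonic for Δ_d, hence d v0 = 0
  have hv0ker : v0 ∈ LinearMap.ker d ⊓ LinearMap.ker ds := by
    rw [← hker2, ← hker1]; exact hv0
  have hdv0 : d v0 = 0 := hv0ker.1
  -- anticommutation pointwise
  have hA1 : ∀ x, d (D x) = - D (d x) := by
    intro x
    have h := LinearMap.congr_fun hanti1 x
    simp only [LinearMap.add_apply, LinearMap.comp_apply, LinearMap.zero_apply] at h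
    rw [eq_neg_iff_add_eq_zero]; exact h
  have hA2 : ∀ x, d (Ds x) = - Ds (d x) := by
    intro x
    have h := LinearMap.congr_fun hanti2 x
    simp only [LinearMap.add_apply, LinearMap.comp_apply, LinearMap.zero_apply] at h
    rw [eq_neg_iff_add_eq_zero]; exact h
  have hDD : ∀ x, D (D x) = 0 := fun x => by
    have h := LinearMap.congr_fun hD2 x
    simpa using h
  -- u = d(D u1) + d(Ds u2)
  have hu : u = d (D u1) + d (Ds u2) := by
    rw [huv, hvsum]
    simp [map_add, hdv0]
  -- D (d (Ds u2)) = 0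
  have hDdDs : D (d (Ds u2)) = 0 := by
    have h1 : D u = D (d (D u1)) + D (d (Ds u2)) := by rw [hu, map_add]
    have h2 : D (d (D u1)) = 0 := by
      rw [hA1, map_neg, hDD, neg_zero]
    rw [hDu, h2, zero_add] at h1
    exact h1.symm
  -- d (Ds u2) ∈ Im Ds and ∈ ker D, so it's 0
  have hz : d (Ds u2) = 0 := by
    have h3 : d (Ds u2) = Ds (- d u2) := by rw [map_neg, hA2]
    have h4 : (inner ℂ (d (Ds u2)) (Ds (- d u2)) : ℂ) = 0 := horth _ _ hDdDs
    rw [← h3] at h4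
    exact inner_self_eq_zero.mp h4
  exact ⟨u1, by rw [hu, hz, add_zero]⟩
end

section
/- Let X be a compact complex manifold with dim_ℂ X = n satisfying: for every k and every k-form u ∈ ker d_h ∩ ker d_{-1/h}, u ∈ Im d_h implies u ∈ Im(d_h d_{-1/h}) = Im(∂∂̄) (the h-∂∂̄-property, h ≠ 0). Then the Frölicher spectral sequence of X degenerates at E₁; in particular, the differentials d₁ : E_1^{p,q}(X) → E_1^{p+1,q}(X) vanish identically, since for any ∂̄-closed (p,q)-form α one has ∂α = d_h(h^{-1}α) ∈ Im d_h ∩ ker d_h ∩ ker d_{-1/h}, whence ∂α ∈ Im(∂∂̄) ⊆ Im ∂̄. -/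
/-- h-∂∂̄-manifolds have E₁-degenerate Frölicher spectral sequence. Abstract formulation:
M is the space of all smooth forms, G p q the subspace of pure (p,q)-forms (an
independent grading with total space M), P = ∂ and Q = ∂̄, and d_h = h∂ + ∂̄. The
h-∂∂̄-hypothesis is imposed on forms of pure total degree k, i.e. elements of
⨆ p, G p (k-p). Conclusion: for every ∂̄-closed pure-type form α of bidegree (p,q),
∂α = ∂̄∂u for some u of bidegree (p,q-1); in particular ∂α ∈ Im ∂̄, i.e. the
differentials d₁ of the Frölicher spectral sequence vanish identically. -/
theorem stmt_19 {M : Type*} [AddCommGroup M] [Module ℂ M]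
    (G : ℤ → ℤ → Submodule ℂ M)
    (P Q : M →ₗ[ℂ] M) (h : ℝ) (hh : h ≠ 0)
    (hGP : ∀ p q : ℤ, (G p q).map P ≤ G (p + 1) q)
    (hGQ : ∀ p q : ℤ, (G p q).map Q ≤ G p (q + 1))
    (hP2 : P ∘ₗ P = 0) (hQ2 : Q ∘ₗ Q = 0) (hPQ : P ∘ₗ Q + Q ∘ₗ P = 0)
    (hindep : iSupIndep (fun pq : ℤ × ℤ => G pq.1 pq.2))
    (htop : (⨆ pq : ℤ × ℤ, G pq.1 pq.2) = ⊤)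
    (hddbar : ∀ (k : ℤ) (u : M), u ∈ (⨆ p : ℤ, G p (k - p)) →
      ((h : ℂ) • P + Q) u = 0 → (((-1 / h : ℝ) : ℂ) • P + Q) u = 0 →
      u ∈ LinearMap.range ((h : ℂ) • P + Q) →
      ∃ w : M, P (Q w) = u) :
    ∀ (p q : ℤ) (α : M), α ∈ G p q → Q α = 0 →
      ∃ u ∈ G p (q - 1), P α = Q (P u) := by
  intro p q α hα hQα
  have hhc : (h : ℂ) ≠ 0 := by exact_mod_cast hh
  have hPP : ∀ m : M, P (P m) = 0 := fun m => congrFun (congrArg DFunLike.coe hP2) m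
  have hQP : ∀ m : M, Q (P m) = - P (Q m) := by
    intro m
    have := congrFun (congrArg DFunLike.coe hPQ) m
    simp only [LinearMap.add_apply, LinearMap.comp_apply, LinearMap.zero_apply] at this
    exact eq_neg_of_add_eq_zero_right this
  -- Pα lies in G (p+1) q
  have hPα : P α ∈ G (p + 1) q := hGP p q ⟨α, hα, rfl⟩
  -- Pα is in the degree-(p+q+1) part
  have hdeg : P α ∈ (⨆ p' : ℤ, G p' ((p + q + 1) - p')) := by
    refine Submodule.mem_iSup_of_mem (p + 1) ?_
    have : p + q + 1 - (p + 1) = q := by ring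
    rw [this]; exact hPα
  -- Pα is killed by both twisted differentials
  have hker : ∀ c : ℂ, (c • P + Q) (P α) = 0 := by
    intro c
    simp only [LinearMap.add_apply, LinearMap.smul_apply, hPP, hQP α, hQα, map_zero,
      smul_zero, neg_zero, add_zero]
  -- Pα is in the range of d_h
  have hrange : P α ∈ LinearMap.range ((h : ℂ) • P + Q) := by
    refine ⟨(h : ℂ)⁻¹ • α, ?_⟩
    simp only [LinearMap.add_apply, LinearMap.smul_apply, map_smul, hQα, smul_zero, add_zero,
      smul_smul, inv_mul_cancel₀ hhc, one_smul]
  obtain ⟨w, hw⟩ := hddbar (p + q + 1) (P α) hdeg (hker _) (hker _) hrange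
  -- decompose w using the internal direct sum
  have hI : DirectSum.IsInternal (fun pq : ℤ × ℤ => G pq.1 pq.2) :=
    DirectSum.isInternal_submodule_of_iSupIndep_of_iSup_eq_top hindep htop
  obtain ⟨x, hx⟩ := hI.surjective w
  have hx' : DirectSum.coeLinearMap (fun pq : ℤ × ℤ => G pq.1 pq.2) x = w := hx
  classical
  set j : ℤ × ℤ := (p, q - 1) with hj
  set F : ℤ × ℤ → M := fun i => P (Q (x i)) with hF
  -- F i belongs to G (i.1+1) (i.2+1)
  have hFmem : ∀ i : ℤ × ℤ, F i ∈ G (i.1 + 1) (i.2 + 1) :=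
    fun i => hGP i.1 (i.2 + 1) ⟨Q (x i), hGQ i.1 i.2 ⟨x i, (x i).2, rfl⟩, rfl⟩
  -- P Q w = sum of F over support
  have hsum : P α = ∑ i ∈ x.support, F i := by
    rw [← hw, ← hx', DirectSum.coeLinearMap_eq_dfinsuppSum, DFinsupp.sum]
    rw [map_sum, map_sum]
  have hsplit : P α = F j + ∑ i ∈ x.support.erase j, F i := by
    by_cases hjs : j ∈ x.support
    · rw [hsum, Finset.add_sum_erase _ _ hjs]
    · have hxj : x j = 0 := DFinsupp.notMem_support_iff.mp hjs
      rw [hsum, Finset.erase_eq_of_notMem hjs, hF]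
      simp [hxj]
  -- the difference lies in both G (p+1,q) and the sup of the others
  have hdiff1 : P α - F j ∈ G (p + 1) q := by
    refine sub_mem hPα ?_
    have := hFmem j
    simpa [hj, sub_add_cancel] using this
  have hdiff2 : P α - F j ∈ ⨆ (i : ℤ × ℤ) (_ : i ≠ ((p + 1, q) : ℤ × ℤ)), G i.1 i.2 := by
    have : P α - F j = ∑ i ∈ x.support.erase j, F i := by
      rw [hsplit]; abel
    rw [this]
    refine Submodule.sum_mem _ ?_
    intro i hi
    have hine : i ≠ j := Finset.ne_of_mem_erase hi
    have hne : ((i.1 + 1, i.2 + 1) : ℤ × ℤ) ≠ (p + 1, q) := by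
      intro hcontra
      apply hine
      have h1 : i.1 + 1 = p + 1 := congrArg Prod.fst hcontra
      have h2 : i.2 + 1 = q := congrArg Prod.snd hcontra
      have e1 : i.1 = p := by omega
      have e2 : i.2 = q - 1 := by omega
      rw [hj]
      exact Prod.ext (by simp [e1]) (by simp [e2])
    exact Submodule.mem_iSup_of_mem ((i.1 + 1, i.2 + 1)) (Submodule.mem_iSup_of_mem hne (hFmem i))
  -- independence kills the difference
  have hzero : P α - F j = 0 := by
    have hd := hindep ((p + 1, q) : ℤ × ℤ)
    exact (Submodule.disjoint_def.mp hd) _ hdiff1 hdiff2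
  have hPαeq : P α = P (Q (x j)) := by
    have := sub_eq_zero.mp hzero
    simpa [hF] using this
  refine ⟨-(x j : M), neg_mem (x j).2, ?_⟩
  rw [map_neg, map_neg, hQP, neg_neg, ← hPαeq]
end
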